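/- Over ℝ² with the ternary Wronskian bracket [f,g,h] = det of the matrix with rows (f,g,h), (f_x,g_x,h_x), (f_y,g_y,h_y), the four-dimensional span A = ⟨1, x, y, xy⟩ is closed under the bracket, with the commutation relations [1,x,y] = 1, [1,x,xy] = x, [1,y,xy] = −y, [x,y,xy] = −xy on the basis elements; in particular every bracket of three basis elements lies in A. -/
import Mathlib


open MvPolynomial

/-- The ternary Wronskian bracket `W_{d=2}^{k=1} = 1 ∧ ∂_x ∧ ∂_y`. -/
noncomputable def wronsk3 (f g h : MvPolynomial (Fin 2) ℝ) : MvPolynomial (Fin 2) ℝ :=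
  Matrix.det !![f, g, h;
    pderiv 0 f, pderiv 0 g, pderiv 0 h;
    pderiv 1 f, pderiv 1 g, pderiv 1 h]

/-- Membership in the span `⟨1, x, y, xy⟩` is equivalent to having an explicit
representation `a + b·x + c·y + d·xy`. -/
lemma mem_span4_iff (p : MvPolynomial (Fin 2) ℝ) :
    p ∈ Submodule.span ℝ ({1, X 0, X 1, X 0 * X 1} : Set (MvPolynomial (Fin 2) ℝ)) ↔
    ∃ a b c d : ℝ, p = C a + C b * X 0 + C c * X 1 + C d * (X 0 * X 1) := by
  constructor
  · intro hp
    induction hp using Submodule.span_induction with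
    | mem z hz =>
      rcases hz with rfl | rfl | rfl | rfl
      · exact ⟨1, 0, 0, 0, by simp⟩
      · exact ⟨0, 1, 0, 0, by simp⟩
      · exact ⟨0, 0, 1, 0, by simp⟩
      · exact ⟨0, 0, 0, 1, by simp⟩
    | zero => exact ⟨0, 0, 0, 0, by simp⟩
    | add u v _ _ hu hv =>
      obtain ⟨a1, b1, c1, d1, rfl⟩ := hu
      obtain ⟨a2, b2, c2, d2, rfl⟩ := hv
      exact ⟨a1 + a2, b1 + b2, c1 + c2, d1 + d2, by push_cast [map_add]; ring⟩
    | smul r u _ hu =>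
      obtain ⟨a, b, c, d, rfl⟩ := hu
      exact ⟨r * a, r * b, r * c, r * d, by simp [smul_eq_C_mul, map_mul]; ring⟩
  · rintro ⟨a, b, c, d, rfl⟩
    have h1 : (1 : MvPolynomial (Fin 2) ℝ) ∈ Submodule.span ℝ
        ({1, X 0, X 1, X 0 * X 1} : Set (MvPolynomial (Fin 2) ℝ)) :=
      Submodule.subset_span (by simp)
    have h2 : (X 0 : MvPolynomial (Fin 2) ℝ) ∈ Submodule.span ℝ
        ({1, X 0, X 1, X 0 * X 1} : Set (MvPolynomial (Fin 2) ℝ)) :=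
      Submodule.subset_span (by simp)
    have h3 : (X 1 : MvPolynomial (Fin 2) ℝ) ∈ Submodule.span ℝ
        ({1, X 0, X 1, X 0 * X 1} : Set (MvPolynomial (Fin 2) ℝ)) :=
      Submodule.subset_span (by simp)
    have h4 : (X 0 * X 1 : MvPolynomial (Fin 2) ℝ) ∈ Submodule.span ℝ
        ({1, X 0, X 1, X 0 * X 1} : Set (MvPolynomial (Fin 2) ℝ)) :=
      Submodule.subset_span (by simp)
    have e : ∀ (r : ℝ) (q : MvPolynomial (Fin 2) ℝ), C r * q = r • q := by
      intro r q; rw [smul_eq_C_mul]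
    rw [show (C a : MvPolynomial (Fin 2) ℝ) = C a * 1 by ring]
    rw [e, e, e, e]
    exact Submodule.add_mem _ (Submodule.add_mem _ (Submodule.add_mem _
      (Submodule.smul_mem _ _ h1) (Submodule.smul_mem _ _ h2))
      (Submodule.smul_mem _ _ h3)) (Submodule.smul_mem _ _ h4)

set_option maxHeartbeats 1000000 in
/-- Explicit formula for the ternary Wronskian bracket. -/
lemma wronsk3_formula (a0 a1 a2 a3 b0 b1 b2 b3 c0 c1 c2 c3 : ℝ) :
    wronsk3 (C a0 + C a1 * X 0 + C a2 * X 1 + C a3 * (X 0 * X 1))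
            (C b0 + C b1 * X 0 + C b2 * X 1 + C b3 * (X 0 * X 1))
            (C c0 + C c1 * X 0 + C c2 * X 1 + C c3 * (X 0 * X 1))
    = C (a0 * (b1 * c2 - b2 * c1) - a1 * (b0 * c2 - b2 * c0) + a2 * (b0 * c1 - b1 * c0))
      + C (a0 * (b1 * c3 - b3 * c1) - a1 * (b0 * c3 - b3 * c0) + a3 * (b0 * c1 - b1 * c0)) * X 0
      + C (-(a0 * (b2 * c3 - b3 * c2) - a2 * (b0 * c3 - b3 * c0) + a3 * (b0 * c2 - b2 * c0))) * X 1
      + C (-(a1 * (b2 * c3 - b3 * c2) - a2 * (b1 * c3 - b3 * c1) + a3 * (b1 * c2 - b2 * c1)))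
          * (X 0 * X 1) := by
  simp [wronsk3, Matrix.det_fin_three, Matrix.vecHead, Matrix.vecTail,
    pderiv_X_of_ne (by decide : (0:Fin 2) ≠ 1), pderiv_X_of_ne (by decide : (1:Fin 2) ≠ 0),
    Derivation.leibniz, smul_eq_mul]
  ring

/-- The span `A = ⟨1, x, y, xy⟩` is closed under the ternary
Wronskian bracket, with `[1,x,y] = 1`, `[1,x,xy] = x`, `[1,y,xy] = −y`,
`[x,y,xy] = −xy`. -/
theorem stmt7 :
    (∀ f g h : MvPolynomial (Fin 2) ℝ,
      f ∈ Submodule.span ℝ ({1, X 0, X 1, X 0 * X 1} : Set (MvPolynomial (Fin 2) ℝ)) →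
      g ∈ Submodule.span ℝ ({1, X 0, X 1, X 0 * X 1} : Set (MvPolynomial (Fin 2) ℝ)) →
      h ∈ Submodule.span ℝ ({1, X 0, X 1, X 0 * X 1} : Set (MvPolynomial (Fin 2) ℝ)) →
      wronsk3 f g h ∈
        Submodule.span ℝ ({1, X 0, X 1, X 0 * X 1} : Set (MvPolynomial (Fin 2) ℝ)))
    ∧ wronsk3 1 (X 0) (X 1) = 1
    ∧ wronsk3 1 (X 0) (X 0 * X 1) = X 0
    ∧ wronsk3 1 (X 1) (X 0 * X 1) = -(X 1)
    ∧ wronsk3 (X 0) (X 1) (X 0 * X 1) = -(X 0 * X 1) := by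
  refine ⟨?_, ?_, ?_, ?_, ?_⟩
  · intro f g h hf hg hh
    rw [mem_span4_iff] at hf hg hh ⊢
    obtain ⟨a0, a1, a2, a3, rfl⟩ := hf
    obtain ⟨b0, b1, b2, b3, rfl⟩ := hg
    obtain ⟨c0, c1, c2, c3, rfl⟩ := hh
    exact ⟨_, _, _, _, wronsk3_formula a0 a1 a2 a3 b0 b1 b2 b3 c0 c1 c2 c3⟩
  · simp [wronsk3, Matrix.det_fin_three, Matrix.vecHead, Matrix.vecTail]
  · simp [wronsk3, Matrix.det_fin_three, Matrix.vecHead, Matrix.vecTail,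
      pderiv_X_of_ne (by decide : (0:Fin 2) ≠ 1), pderiv_X_of_ne (by decide : (1:Fin 2) ≠ 0),
      Derivation.leibniz, smul_eq_mul]
  · simp [wronsk3, Matrix.det_fin_three, Matrix.vecHead, Matrix.vecTail,
      pderiv_X_of_ne (by decide : (0:Fin 2) ≠ 1), pderiv_X_of_ne (by decide : (1:Fin 2) ≠ 0),
      Derivation.leibniz, smul_eq_mul]
  · simp [wronsk3, Matrix.det_fin_three, Matrix.vecHead, Matrix.vecTail,
      pderiv_X_of_ne (by decide : (0:Fin 2) ≠ 1), pderiv_X_of_ne (by decide : (1:Fin 2) ≠ 0),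
      Derivation.leibniz, smul_eq_mul]
    ring
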